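/- Let R be a commutative ring. The set of right null-polynomials N = {f ∈ (T_n(R))[x] : f(C) = 0 for all C ∈ T_n(R)}, where f(C) = Σ_k F_k C^k, is a two-sided ideal of the (noncommutative) polynomial ring (T_n(R))[x]. -/

import Mathlib

/-- Membership in `(Tₙ(R))[x]`: all coefficients are upper triangular. -/
def IsTriPoly (n : ℕ) (R : Type*) [CommRing R]
    (f : Polynomial (Matrix (Fin n) (Fin n) R)) : Prop :=
  ∀ k, (f.coeff k).BlockTriangular id

/-- `f` is a right null-polynomial on `Tₙ(R)`: `f ∈ (Tₙ(R))[x]` and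
`f(C) = Σ_k F_k C^k = 0` for every `C ∈ Tₙ(R)`. -/
def IsRightNull (n : ℕ) (R : Type*) [CommRing R]
    (f : Polynomial (Matrix (Fin n) (Fin n) R)) : Prop :=
  IsTriPoly n R f ∧
    ∀ C : Matrix (Fin n) (Fin n) R, C.BlockTriangular id → f.eval C = 0

open Polynomial Matrix Finset

namespace NP

variable {R : Type*} [CommRing R] {n : ℕ}

local notation "M" => Matrix (Fin n) (Fin n) R



/-- Complete homogeneous symmetric function of the entries of a list. -/
def hp : ℕ → List R → R
  | 0, _ => 1
  | _+1, [] => 0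
  | k+1, c::cs => c * hp k (c::cs) + hp (k+1) cs
termination_by k l => (l.length, k)

@[simp] lemma hp_zero (l : List R) : hp 0 l = 1 := by cases l <;> simp [hp]
@[simp] lemma hp_succ_nil (k : ℕ) : hp (k+1) ([] : List R) = 0 := by simp [hp]
lemma hp_succ_cons (k : ℕ) (c : R) (cs : List R) :
    hp (k+1) (c::cs) = c * hp k (c::cs) + hp (k+1) cs := by rw [hp]

lemma hp_single (k : ℕ) (d : R) : hp k [d] = d ^ k := by
  induction k with
  | zero => simp
  | succ k ih => rw [hp_succ_cons, ih, hp_succ_nil, add_zero, pow_succ, mul_comm]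



/-- `S F N s l = ∑ h_u(l) F (s+u)`. -/
def S (F : ℕ → M) (N : ℕ) (s : ℕ) (l : List R) : M :=
  ∑ u ∈ range N, hp u l • F (s + u)

lemma S_eq_zero {F : ℕ → M} {N : ℕ} (hF : ∀ i, N ≤ i → F i = 0) {s : ℕ} (hs : N ≤ s)
    (l : List R) : S F N s l = 0 :=
  Finset.sum_eq_zero fun u _ => by rw [hF (s+u) (by omega), smul_zero]

lemma S_nil {F : ℕ → M} {N : ℕ} (hF : ∀ i, N ≤ i → F i = 0) (s : ℕ) :
    S F N s [] = F s := by
  cases N with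
  | zero => simp [S, hF s (Nat.zero_le s)]
  | succ N' =>
    rw [S, Finset.sum_eq_single 0]
    · simp
    · intro u _ hu
      rcases Nat.exists_eq_succ_of_ne_zero hu with ⟨v, rfl⟩
      simp
    · intro h; exact absurd (Finset.mem_range.2 (Nat.succ_pos _)) h

lemma keyS_C1 {F : ℕ → M} {N : ℕ} (hF : ∀ i, N ≤ i → F i = 0) (c : R) (cs : List R) (s : ℕ) :
    ∑ a ∈ range N, c ^ a • S F N (s + a) cs
      = S F N s cs + c • ∑ a ∈ range N, c ^ a • S F N (s + 1 + a) cs := by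
  cases N with
  | zero => simp [S]
  | succ N' =>
    rw [Finset.sum_range_succ' (fun a => c ^ a • S F (N'+1) (s + a) cs) N']
    have h1 : ∑ a ∈ range (N'+1), c ^ a • S F (N'+1) (s + 1 + a) cs
        = ∑ a ∈ range N', c ^ a • S F (N'+1) (s + 1 + a) cs := by
      rw [Finset.sum_range_succ, S_eq_zero hF (by omega), smul_zero, add_zero]
    rw [h1, Finset.smul_sum]
    rw [add_comm]
    congr 1
    · simp
    · apply Finset.sum_congr rfl
      intro a _
      rw [show s + (a+1) = s + 1 + a by omega, pow_succ, mul_comm (c ^ a) c, ← smul_smul]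

lemma keyS_C2 {F : ℕ → M} {N : ℕ} (hF : ∀ i, N ≤ i → F i = 0) (c : R) (cs : List R) (s : ℕ) :
    S F N s (c::cs) = S F N s cs + c • S F N (s+1) (c::cs) := by
  cases N with
  | zero => simp [S]
  | succ N'
  => rw [S, Finset.sum_range_succ' (fun u => hp u (c::cs) • F (s + u)) N']
     have e1 : ∀ u, hp (u+1) (c::cs) • F (s + (u+1))
         = c • (hp u (c::cs) • F (s + 1 + u)) + hp (u+1) cs • F (s + (u+1)) := by
       intro u
       rw [hp_succ_cons, add_smul, ← smul_smul, show s + (u+1) = s + 1 + u by omega]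
     calc (∑ u ∈ range N', hp (u+1) (c::cs) • F (s + (u+1))) + hp 0 (c::cs) • F (s + 0)
         = (∑ u ∈ range N', (c • (hp u (c::cs) • F (s + 1 + u)) + hp (u+1) cs • F (s + (u+1))))
             + hp 0 (c::cs) • F (s + 0) := by
           rw [Finset.sum_congr rfl (fun u _ => e1 u)]
       _ = (c • ∑ u ∈ range N', hp u (c::cs) • F (s + 1 + u))
             + ((∑ u ∈ range N', hp (u+1) cs • F (s + (u+1))) + hp 0 cs • F (s + 0)) := by
           rw [Finset.sum_add_distrib, Finset.smul_sum]; simp [add_assoc]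
       _ = (c • ∑ u ∈ range (N'+1), hp u (c::cs) • F (s + 1 + u)) + S F (N'+1) s cs := by
           rw [S, Finset.sum_range_succ' (fun u => hp u cs • F (s + u)) N']
           congr 1
           rw [Finset.sum_range_succ, hF (s+1+N') (by omega), smul_zero, add_zero]
       _ = S F (N'+1) s cs + c • S F (N'+1) (s+1) (c::cs) := by
           rw [add_comm]; rfl

lemma keyS {F : ℕ → M} {N : ℕ} (hF : ∀ i, N ≤ i → F i = 0) (c : R) (cs : List R) (s : ℕ) :
    ∑ a ∈ range N, c ^ a • S F N (s + a) cs = S F N s (c::cs) := by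
  have main : ∀ k s, N ≤ s + k →
      ∑ a ∈ range N, c ^ a • S F N (s + a) cs = S F N s (c::cs) := by
    intro k
    induction k with
    | zero =>
      intro s hs
      rw [S_eq_zero hF (by omega)]
      exact Finset.sum_eq_zero fun a _ => by rw [S_eq_zero hF (by omega), smul_zero]
    | succ k ih =>
      intro s hs
      by_cases hNs : N ≤ s
      · rw [S_eq_zero hF hNs]
        exact Finset.sum_eq_zero fun a _ => by rw [S_eq_zero hF (by omega), smul_zero]
      · rw [keyS_C1 hF, keyS_C2 hF (c := c), ih (s+1) (by omega)]
  exact main N s (by omega)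





lemma colrep (A : M) (q : Fin n) :
    A * Matrix.single q q (1:R) = ∑ t : Fin n, A t q • Matrix.single t q (1:R) := by
  ext i j
  rw [Matrix.mul_apply, Matrix.sum_apply]
  simp only [Matrix.single, Matrix.of_apply, Matrix.smul_apply, smul_eq_mul,
    mul_ite, mul_one, mul_zero, ite_and]
  by_cases hj : q = j
  · subst hj
    simp only [if_pos rfl]
    rw [Finset.sum_eq_single q, Finset.sum_eq_single i] <;> simp +contextual [eq_comm]
  · simp [hj]

lemma one_eq_sum_std : (1 : M) = ∑ q : Fin n, Matrix.single q q (1:R) := by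
  ext i j
  rw [Matrix.sum_apply]
  by_cases hij : i = j
  · subst hij
    rw [Matrix.one_apply_eq, Finset.sum_eq_single i]
    · simp [Matrix.single]
    · intro b _ hb; simp [Matrix.single, hb]
    · simp
  · rw [Matrix.one_apply_ne hij]
    symm
    refine Finset.sum_eq_zero fun x _ => ?_
    simp only [Matrix.single, Matrix.of_apply, ite_and]
    split_ifs with h1 h2
    · exact absurd (h1.symm.trans h2) hij
    · rfl
    · rfl

lemma tri_std {x y : Fin n} (hxy : x ≤ y) (c : R) :
    (Matrix.single x y c).BlockTriangular (id : Fin n → Fin n) := by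
  intro i j hij
  simp only [Matrix.single, Matrix.of_apply, ite_and, id] at *
  by_cases hx : x = i
  · subst hx
    by_cases hy : y = j
    · subst hy; exact absurd hij (not_lt.2 hxy)
    · simp [hy]
  · simp [hx]

lemma tri_sum {ι : Type*} {s : Finset ι} {f : ι → M}
    (h : ∀ i ∈ s, (f i).BlockTriangular (id : Fin n → Fin n)) :
    (∑ i ∈ s, f i).BlockTriangular (id : Fin n → Fin n) := by
  intro i j hij
  rw [Matrix.sum_apply]
  exact Finset.sum_eq_zero fun k hk => h k hk hij

lemma tri_smul {A : M} (c : R) (h : A.BlockTriangular (id : Fin n → Fin n)) :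
    (c • A).BlockTriangular (id : Fin n → Fin n) := by
  intro i j hij
  rw [Matrix.smul_apply, h hij, smul_zero]

lemma tri_pow {A : M} (h : A.BlockTriangular (id : Fin n → Fin n)) (k : ℕ) :
    (A ^ k).BlockTriangular (id : Fin n → Fin n) := by
  induction k with
  | zero => rw [pow_zero]; exact Matrix.blockTriangular_one
  | succ k ih => rw [pow_succ]; exact ih.mul h

lemma powcol (C : M) (q : Fin n) (i : ℕ) :
    C ^ i * Matrix.single q q (1:R)
      = (C q q) ^ i • Matrix.single q q (1:R)
        + ∑ j ∈ range i, (C q q) ^ (i - 1 - j) •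
            (C ^ j * ((C - C q q • 1) * Matrix.single q q (1:R))) := by
  set c := C q q with hc
  set Eq := Matrix.single q q (1:R) with hEq
  set U' := (C - c • 1) * Eq with hU'
  have hCE : C * Eq = U' + c • Eq := by
    rw [hU', sub_mul, smul_mul_assoc, one_mul]; abel
  induction i with
  | zero => simp
  | succ i ih =>
    rw [pow_succ, mul_assoc, hCE, mul_add, Matrix.mul_smul, ih]
    rw [smul_add, Finset.smul_sum, Finset.sum_range_succ]
    have h1 : ∀ j ∈ range i, c • c ^ (i - 1 - j) • (C ^ j * U')
        = c ^ (i + 1 - 1 - j) • (C ^ j * U') := by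
      intro j hj
      rw [smul_smul, ← pow_succ']
      congr 2
      have := Finset.mem_range.1 hj
      omega
    rw [Finset.sum_congr rfl h1]
    have h2 : c ^ (i + 1 - 1 - i) = 1 := by simp
    rw [h2, one_smul, smul_smul, ← pow_succ']
    abel




/-- truncated: `hpt s i l = h_{i-s}(l)` if `s ≤ i`, else `0`. -/
def hpt (s i : ℕ) (l : List R) : R := if s ≤ i then hp (i - s) l else 0



def chainPos (t : Fin n) (m : ℕ) (hmn : t.val + m < n) : ℕ → Fin n :=
  fun a => ⟨t.1 + min a m, by have := min_le_right a m; omega⟩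

lemma chainPos_val (t : Fin n) (m : ℕ) (hmn : t.val + m < n) {a : ℕ} (ha : a ≤ m) :
    (chainPos t m hmn a).val = t.val + a := by
  simp [chainPos, Nat.min_eq_left ha]

lemma chainPos_inj (t : Fin n) (m : ℕ) (hmn : t.val + m < n) {a b : ℕ}
    (ha : a ≤ m) (hb : b ≤ m) (h : chainPos t m hmn a = chainPos t m hmn b) : a = b := by
  have := congrArg Fin.val h
  rw [chainPos_val t m hmn ha, chainPos_val t m hmn hb] at this
  omega

lemma chainPos_zero (t : Fin n) (m : ℕ) (hmn : t.val + m < n) : chainPos t m hmn 0 = t := by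
  apply Fin.ext; simp [chainPos]

def chain (t : Fin n) (m : ℕ) (hmn : t.val + m < n) (ds : List R) (a₀ : ℕ) : M :=
  (∑ a ∈ range (m+1),
      ds.getD a 0 • Matrix.single (chainPos t m hmn a) (chainPos t m hmn a) (1:R))
  + ∑ a ∈ Ico a₀ m, Matrix.single (chainPos t m hmn a) (chainPos t m hmn (a+1)) (1:R)

section chainlemmas

variable (t : Fin n) (m : ℕ) (hmn : t.val + m < n) (ds : List R) (a₀ : ℕ)

lemma tri_std' {x y : Fin n} (hxy : x ≤ y) (c : R) :
    (Matrix.single x y c).BlockTriangular (id : Fin n → Fin n) := by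
  intro i j hij
  simp only [Matrix.single, Matrix.of_apply, ite_and, id] at *
  by_cases hx : x = i
  · subst hx
    by_cases hy : y = j
    · subst hy; exact absurd hij (not_lt.2 hxy)
    · simp [hy]
  · simp [hx]

lemma tri_sum' {ι : Type*} {s : Finset ι} {f : ι → M}
    (h : ∀ i ∈ s, (f i).BlockTriangular (id : Fin n → Fin n)) :
    (∑ i ∈ s, f i).BlockTriangular (id : Fin n → Fin n) := by
  intro i j hij
  rw [Matrix.sum_apply]
  exact Finset.sum_eq_zero fun k hk => h k hk hij

lemma tri_smul' {A : M} (c : R) (h : A.BlockTriangular (id : Fin n → Fin n)) :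
    (c • A).BlockTriangular (id : Fin n → Fin n) := by
  intro i j hij
  rw [Matrix.smul_apply, h hij, smul_zero]

lemma chain_tri : (chain t m hmn ds a₀).BlockTriangular (id : Fin n → Fin n) := by
  apply Matrix.BlockTriangular.add
  · exact tri_sum' fun a _ => tri_smul' _ (tri_std' le_rfl 1)
  · refine tri_sum' fun a _ => tri_std' ?_ 1
    show (chainPos t m hmn a) ≤ (chainPos t m hmn (a+1))
    rw [Fin.le_def]
    simp only [chainPos]
    omega

lemma chain_mul_E {a : ℕ} (ha : a ≤ m) :
    chain t m hmn ds a₀ * Matrix.single (chainPos t m hmn a) (chainPos t m hmn m) (1:R)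
      = ds.getD a 0 • Matrix.single (chainPos t m hmn a) (chainPos t m hmn m) (1:R)
        + (if a₀ + 1 ≤ a then
            Matrix.single (chainPos t m hmn (a-1)) (chainPos t m hmn m) (1:R) else 0) := by
  rw [chain, add_mul, Finset.sum_mul, Finset.sum_mul]
  congr 1
  · rw [Finset.sum_eq_single a]
    · rw [smul_mul_assoc, Matrix.single_mul_single_same, one_mul]
    · intro b hb hba
      rw [smul_mul_assoc, Matrix.single_mul_single_of_ne, smul_zero]
      exact fun h => hba (chainPos_inj t m hmn (by simp at hb; omega) ha h)
    · intro h; exact absurd (Finset.mem_range.2 (by omega)) h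
  · by_cases hcase : a₀ + 1 ≤ a
    · rw [if_pos hcase, Finset.sum_eq_single (a-1)]
      · have h : chainPos t m hmn ((a-1)+1) = chainPos t m hmn a := by congr 1; omega
        rw [h, Matrix.single_mul_single_same, one_mul]
      · intro b hb hba
        apply Matrix.single_mul_single_of_ne
        intro h
        exact hba (by have := chainPos_inj t m hmn (by simp at hb; omega) ha h; omega)
      · intro h
        exact absurd (Finset.mem_Ico.2 (by omega)) h
    · rw [if_neg hcase]
      apply Finset.sum_eq_zero
      intro b hb
      apply Matrix.single_mul_single_of_ne
      intro h
      have hb' := Finset.mem_Ico.1 hb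
      have := chainPos_inj t m hmn (by omega) ha h
      omega

lemma hpt_rec {a i : ℕ} (ha : a ≤ m) (hds : ds.length = m + 1) :
    hpt (m - a) (i+1) (ds.drop a)
      = ds.getD a 0 * hpt (m - a) i (ds.drop a)
        + (if a + 1 ≤ m then hpt (m - (a+1)) i (ds.drop (a+1)) else 0) := by
  have hlt : a < ds.length := by omega
  have hcons : ds.drop a = ds.getD a 0 :: ds.drop (a+1) := by
    rw [List.getD_eq_getElem ds 0 hlt]
    exact List.drop_eq_getElem_cons hlt
  set d := ds.getD a 0
  set l := ds.drop (a+1) with hl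
  rw [hcons]
  by_cases h1 : m - a ≤ i
  · rw [hpt, if_pos (by omega), hpt, if_pos h1]
    rw [show i + 1 - (m - a) = (i - (m - a)) + 1 by omega, hp_succ_cons]
    congr 1
    by_cases h2 : a + 1 ≤ m
    · rw [if_pos h2, hpt, if_pos (by omega)]
      congr 1
      omega
    · have ham : a = m := by omega
      have hnil : l = [] := by
        rw [hl, List.drop_eq_nil_iff]
        omega
      rw [if_neg h2, hnil, hp_succ_nil]
  · by_cases h2 : m - a = i + 1
    · rw [hpt, if_pos (by omega), show i + 1 - (m - a) = 0 by omega, hp_zero]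
      rw [hpt, if_neg h1, mul_zero, zero_add]
      rw [if_pos (by omega), hpt, if_pos (by omega), show i - (m - (a+1)) = 0 by omega, hp_zero]
    · rw [hpt, if_neg (by omega), hpt, if_neg h1, mul_zero, zero_add]
      by_cases h3 : a + 1 ≤ m
      · rw [if_pos h3, hpt, if_neg (by omega)]
      · rw [if_neg h3]

lemma chaincol (hds : ds.length = m + 1) (ha₀ : a₀ ≤ m) (i : ℕ) :
    chain t m hmn ds a₀ ^ i
        * Matrix.single (chainPos t m hmn m) (chainPos t m hmn m) (1:R)
      = ∑ a ∈ Icc a₀ m, hpt (m - a) i (ds.drop a) •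
          Matrix.single (chainPos t m hmn a) (chainPos t m hmn m) (1:R) := by
  induction i with
  | zero =>
    rw [pow_zero, one_mul, eq_comm, Finset.sum_eq_single m]
    · rw [hpt, if_pos (by omega), Nat.sub_self, hp_zero, one_smul]
    · intro b hb hbm
      have hb' := Finset.mem_Icc.1 hb
      rw [hpt, if_neg (by omega), zero_smul]
    · intro h; exact absurd (Finset.mem_Icc.2 (by omega)) h
  | succ i ih =>
    rw [pow_succ', mul_assoc, ih, Finset.mul_sum]
    have step1 : ∀ a ∈ Icc a₀ m,
        chain t m hmn ds a₀ * (hpt (m - a) i (ds.drop a) •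
            Matrix.single (chainPos t m hmn a) (chainPos t m hmn m) (1:R))
          = (ds.getD a 0 * hpt (m - a) i (ds.drop a)) •
              Matrix.single (chainPos t m hmn a) (chainPos t m hmn m) (1:R)
            + (if a₀ + 1 ≤ a then hpt (m - a) i (ds.drop a) •
                Matrix.single (chainPos t m hmn (a-1)) (chainPos t m hmn m) (1:R) else 0) := by
      intro a ha
      have ham : a ≤ m := (Finset.mem_Icc.1 ha).2
      rw [mul_smul_comm, chain_mul_E t m hmn ds a₀ ham, smul_add]
      congr 1
      · rw [smul_smul, mul_comm]
      · by_cases h : a₀ + 1 ≤ a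
        · rw [if_pos h, if_pos h]
        · rw [if_neg h, if_neg h, smul_zero]
    rw [Finset.sum_congr rfl step1, Finset.sum_add_distrib]
    have step2 : ∑ a ∈ Icc a₀ m, (if a₀ + 1 ≤ a then hpt (m - a) i (ds.drop a) •
            Matrix.single (chainPos t m hmn (a-1)) (chainPos t m hmn m) (1:R) else 0)
        = ∑ a ∈ Icc a₀ m, (if a + 1 ≤ m then hpt (m - (a+1)) i (ds.drop (a+1)) else 0) •
            Matrix.single (chainPos t m hmn a) (chainPos t m hmn m) (1:R) := by
      rw [← Finset.sum_filter]
      have hfil : (Icc a₀ m).filter (fun a => a₀ + 1 ≤ a) = Icc (a₀+1) m := by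
        ext x; simp only [Finset.mem_filter, Finset.mem_Icc]; omega
      rw [hfil]
      have hpush : ∀ a ∈ Icc a₀ m,
          (if a + 1 ≤ m then hpt (m - (a+1)) i (ds.drop (a+1)) else 0) •
              Matrix.single (chainPos t m hmn a) (chainPos t m hmn m) (1:R)
            = (if a + 1 ≤ m then hpt (m - (a+1)) i (ds.drop (a+1)) •
                Matrix.single (chainPos t m hmn a) (chainPos t m hmn m) (1:R) else 0) := by
        intro a _; split_ifs <;> simp
      rw [Finset.sum_congr rfl hpush, ← Finset.sum_filter]
      refine Finset.sum_nbij' (fun a => a - 1) (fun b => b + 1) ?_ ?_ ?_ ?_ ?_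
      · intro a ha
        simp only [Finset.mem_Icc] at ha
        simp only [Finset.mem_filter, Finset.mem_Icc]
        omega
      · intro b hb
        simp only [Finset.mem_filter, Finset.mem_Icc] at hb
        simp only [Finset.mem_Icc]
        omega
      · intro a ha; simp only [Finset.mem_Icc] at ha; show a - 1 + 1 = a; omega
      · intro b hb; show b + 1 - 1 = b; omega
      · intro a ha
        simp only [Finset.mem_Icc] at ha
        have h1 : a - 1 + 1 = a := by omega
        rw [h1]
    rw [step2, ← Finset.sum_add_distrib]
    apply Finset.sum_congr rfl
    intro a ha
    have ham : a ≤ m := (Finset.mem_Icc.1 ha).2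
    rw [← add_smul, ← hpt_rec m ds ham hds]

lemma hT0 (F : ℕ → M) (N : ℕ) (hF : ∀ i, N ≤ i → F i = 0) (m : ℕ) (l : List R) :
    (∑ i ∈ range N, hpt m i l • F i) = S F N m l := by
  have h1 : ∀ i ∈ range N, hpt m i l • F i = if m ≤ i then hp (i - m) l • F i else 0 := by
    intro i _; rw [hpt]; split_ifs <;> simp
  rw [Finset.sum_congr rfl h1, ← Finset.sum_filter]
  have hfil : (range N).filter (fun i => m ≤ i) = Ico m N := by
    ext x; simp only [Finset.mem_filter, Finset.mem_range, Finset.mem_Ico]; omega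
  rw [hfil, Finset.sum_Ico_eq_sum_range]
  have h2 : ∀ u ∈ range (N - m), hp (m + u - m) l • F (m + u) = hp u l • F (m + u) := by
    intro u _; congr 2; omega
  rw [Finset.sum_congr rfl h2]
  rw [S]
  refine Finset.sum_subset (fun x hx => ?_) (fun x hx hnx => ?_)
  · simp only [Finset.mem_range] at *; omega
  · simp only [Finset.mem_range] at hx hnx
    rw [hF (m + x) (by omega), smul_zero]

end chainlemmas

lemma claimC (F : ℕ → M) (N : ℕ) (hF : ∀ i, N ≤ i → F i = 0)
    (hnull : ∀ C : M, C.BlockTriangular (id : Fin n → Fin n) → ∑ i ∈ range N, F i * C ^ i = 0)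
    (t : Fin n) (ds : List R) (hne : ds ≠ []) (hlen : ds.length ≤ n - t.val) :
    S F N (ds.length - 1) ds * Matrix.single t t (1:R) = 0 := by
  have htn : t.val < n := t.2
  cases ds with
  | nil => exact absurd rfl hne
  | cons d tail =>
  cases tail with
  | nil =>
    have h1 : S F N 0 [d] = ∑ i ∈ range N, F i * (d • (1:M)) ^ i := by
      rw [S]
      refine Finset.sum_congr rfl fun u _ => ?_
      rw [_root_.smul_pow, one_pow, mul_smul_comm, mul_one, hp_single, zero_add]
    have h2 : ([d] : List R).length - 1 = 0 := rfl
    rw [h2, h1, hnull _ (tri_smul' d Matrix.blockTriangular_one), zero_mul]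
  | cons d₁ rest =>
    set l : List R := d :: d₁ :: rest with hl
    set m : ℕ := l.length - 1 with hm
    have hds : l.length = m + 1 := by rw [hm]; simp [hl]
    have hm1 : 1 ≤ m := by rw [hm]; simp [hl]
    have hmn : t.val + m < n := by
      have h3 := hlen
      rw [hds] at h3
      omega
    have key : ∀ a₀, a₀ ≤ m → ∑ a ∈ Icc a₀ m,
        (∑ i ∈ range N, hpt (m - a) i (l.drop a) • F i) *
          Matrix.single (chainPos t m hmn a) (chainPos t m hmn m) (1:R) = 0 := by
      intro a₀ ha₀
      have h0 := hnull (chain t m hmn l a₀) (chain_tri t m hmn l a₀)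
      have e1 : ∀ a ∈ Icc a₀ m,
          (∑ i ∈ range N, hpt (m - a) i (l.drop a) • F i) *
              Matrix.single (chainPos t m hmn a) (chainPos t m hmn m) (1:R)
            = ∑ i ∈ range N, hpt (m - a) i (l.drop a) •
                (F i * Matrix.single (chainPos t m hmn a) (chainPos t m hmn m) (1:R)) := by
        intro a _
        rw [Finset.sum_mul]
        exact Finset.sum_congr rfl fun i _ => smul_mul_assoc _ _ _
      rw [Finset.sum_congr rfl e1, Finset.sum_comm]
      have e2 : ∀ i ∈ range N,
          ∑ a ∈ Icc a₀ m, hpt (m - a) i (l.drop a) •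
              (F i * Matrix.single (chainPos t m hmn a) (chainPos t m hmn m) (1:R))
            = (F i * chain t m hmn l a₀ ^ i) *
                Matrix.single (chainPos t m hmn m) (chainPos t m hmn m) (1:R) := by
        intro i _
        rw [mul_assoc, chaincol t m hmn l a₀ hds ha₀ i, Finset.mul_sum]
        exact Finset.sum_congr rfl fun a _ => (mul_smul_comm _ _ _).symm
      rw [Finset.sum_congr rfl e2, ← Finset.sum_mul, h0, zero_mul]
    have h00 := key 0 (Nat.zero_le m)
    have h11 := key 1 hm1
    have hins : Icc 0 m = insert 0 (Icc 1 m) := by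
      ext x; simp only [Finset.mem_Icc, Finset.mem_insert]; omega
    rw [hins, Finset.sum_insert (by simp), h11, add_zero] at h00
    simp only [Nat.sub_zero, List.drop_zero, chainPos_zero] at h00
    rw [hT0 F N hF m l] at h00
    have final : S F N m l * Matrix.single t t (1:R)
        = (S F N m l * Matrix.single t (chainPos t m hmn m) (1:R)) *
            Matrix.single (chainPos t m hmn m) t (1:R) := by
      rw [mul_assoc, Matrix.single_mul_single_same, one_mul]
    rw [final, h00, zero_mul]


lemma Bq (F : ℕ → M) (N : ℕ) (hF : ∀ i, N ≤ i → F i = 0)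
    (hnull : ∀ C : M, C.BlockTriangular (id : Fin n → Fin n) → ∑ i ∈ range N, F i * C ^ i = 0) :
    ∀ (q : Fin n) (cs : List R), cs.length ≤ n - 1 - q.val →
      ∀ D C : M, D.BlockTriangular (id : Fin n → Fin n) →
        C.BlockTriangular (id : Fin n → Fin n) →
        ∑ a ∈ range N, S F N (a + cs.length) cs * D * (C ^ a * Matrix.single q q (1:R)) = 0 := by
  suffices H : ∀ k (q : Fin n), q.val < k → ∀ cs : List R, cs.length ≤ n - 1 - q.val →
      ∀ D C : M, D.BlockTriangular (id : Fin n → Fin n) →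
        C.BlockTriangular (id : Fin n → Fin n) →
        ∑ a ∈ range N, S F N (a + cs.length) cs * D * (C ^ a * Matrix.single q q (1:R)) = 0 by
    exact fun q cs h D C hD hC => H (q.val + 1) q (Nat.lt_succ_self _) cs h D C hD hC
  intro k
  induction k with
  | zero => intro q hq; omega
  | succ k ih =>
    intro q hqk cs hcs D C hD hC
    by_cases hqk' : q.val < k
    · exact ih q hqk' cs hcs D C hD hC
    have hqk2 : q.val = k := by omega
    have htn : q.val < n := q.2
    set c : R := C q q with hc
    set U' : M := (C - c • 1) * Matrix.single q q (1:R) with hU'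
    have e1 : ∀ a ∈ range N,
        S F N (a + cs.length) cs * D * (C ^ a * Matrix.single q q (1:R))
          = c ^ a • (S F N (a + cs.length) cs * D * Matrix.single q q (1:R))
            + ∑ j ∈ range a, c ^ (a - 1 - j) •
                (S F N (a + cs.length) cs * D * (C ^ j * U')) := by
      intro a _
      rw [powcol C q a, mul_add, Finset.mul_sum, mul_smul_comm]
      congr 1
      exact Finset.sum_congr rfl fun j _ => mul_smul_comm _ _ _
    rw [Finset.sum_congr rfl e1, Finset.sum_add_distrib]
    have hT1 : ∑ a ∈ range N,
        c ^ a • (S F N (a + cs.length) cs * D * Matrix.single q q (1:R)) = 0 := by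
      have e2 : ∑ a ∈ range N,
          c ^ a • (S F N (a + cs.length) cs * D * Matrix.single q q (1:R))
            = (∑ a ∈ range N, c ^ a • S F N (cs.length + a) cs)
                * (D * Matrix.single q q (1:R)) := by
        rw [Finset.sum_mul]
        refine Finset.sum_congr rfl fun a _ => ?_
        rw [smul_mul_assoc, ← mul_assoc, add_comm cs.length a]
      rw [e2, keyS hF c cs cs.length, colrep D q, Finset.mul_sum]
      refine Finset.sum_eq_zero fun x _ => ?_
      rw [mul_smul_comm]
      by_cases hxq : x ≤ q
      · have hcl : S F N cs.length (c :: cs) * Matrix.single x x (1:R) = 0 := by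
          have hx2 : x.val < n := x.2
          have hxv : x.val ≤ q.val := hxq
          have hle : (c :: cs).length ≤ n - x.val := by
            simp only [List.length_cons]
            omega
          have := claimC F N hF hnull x (c :: cs) (by simp) hle
          simpa using this
        have hsplit : Matrix.single x q (1:R)
            = Matrix.single x x (1:R) * Matrix.single x q (1:R) := by
          rw [Matrix.single_mul_single_same, one_mul]
        rw [hsplit, ← mul_assoc, hcl, zero_mul, smul_zero]
      · have hDx : D x q = 0 := hD (lt_of_not_ge hxq)
        rw [hDx, zero_smul]
    have hT2 : ∑ a ∈ range N, ∑ j ∈ range a,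
        c ^ (a - 1 - j) • (S F N (a + cs.length) cs * D * (C ^ j * U')) = 0 := by
      have e3 : ∀ a ∈ range N, ∑ j ∈ range a,
          c ^ (a - 1 - j) • (S F N (a + cs.length) cs * D * (C ^ j * U'))
            = ∑ j ∈ range N, (if j + 1 ≤ a then
                c ^ (a - 1 - j) • (S F N (a + cs.length) cs * D * (C ^ j * U')) else 0) := by
        intro a ha
        simp only [Finset.mem_range] at ha
        rw [eq_comm, ← Finset.sum_filter]
        have hfil0 : (range N).filter (fun j => j + 1 ≤ a) = range a := by
          ext x; simp only [Finset.mem_filter, Finset.mem_range]; omega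
        rw [hfil0]
      rw [Finset.sum_congr rfl e3, Finset.sum_comm]
      have e45 : ∀ j ∈ range N, ∑ a ∈ range N, (if j + 1 ≤ a then
          c ^ (a - 1 - j) • (S F N (a + cs.length) cs * D * (C ^ j * U')) else 0)
            = S F N (j + 1 + cs.length) (c :: cs) * (D * (C ^ j * U')) := by
        intro j hj
        have e4 : ∑ a ∈ range N, (if j + 1 ≤ a then
            c ^ (a - 1 - j) • (S F N (a + cs.length) cs * D * (C ^ j * U')) else 0)
              = (∑ a ∈ Ico (j+1) N, c ^ (a - 1 - j) • S F N (a + cs.length) cs)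
                * (D * (C ^ j * U')) := by
          rw [Finset.sum_mul, ← Finset.sum_filter]
          have hfil : (range N).filter (fun a => j + 1 ≤ a) = Ico (j+1) N := by
            ext x; simp only [Finset.mem_filter, Finset.mem_range, Finset.mem_Ico]; omega
          rw [hfil]
          refine Finset.sum_congr rfl fun a _ => ?_
          rw [smul_mul_assoc, mul_assoc]
        have e5 : ∑ a ∈ Ico (j+1) N, c ^ (a - 1 - j) • S F N (a + cs.length) cs
            = S F N (j + 1 + cs.length) (c :: cs) := by
          rw [Finset.sum_Ico_eq_sum_range]
          have e6 : ∀ b ∈ range (N - (j+1)),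
              c ^ (j + 1 + b - 1 - j) • S F N ((j + 1 + b) + cs.length) cs
                = c ^ b • S F N ((j + 1 + cs.length) + b) cs := by
            intro b _
            rw [show j + 1 + b - 1 - j = b by omega,
              show (j + 1 + b) + cs.length = (j + 1 + cs.length) + b by omega]
          rw [Finset.sum_congr rfl e6, ← keyS hF c cs (j + 1 + cs.length)]
          refine Finset.sum_subset (fun x hx => by
              simp only [Finset.mem_range] at hx ⊢; omega)
            (fun x hx hnx => ?_)
          simp only [Finset.mem_range] at hx hnx
          rw [S_eq_zero hF (by omega), smul_zero]
        rw [e4, e5]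
      rw [Finset.sum_congr rfl e45]
      have e6' : ∀ j ∈ range N, S F N (j + 1 + cs.length) (c :: cs) * (D * (C ^ j * U'))
          = ∑ x : Fin n, (C - c • 1) x q •
              (S F N (j + 1 + cs.length) (c :: cs) * (D * (C ^ j * Matrix.single x q (1:R)))) := by
        intro j _
        rw [hU', colrep (C - c • 1) q, Finset.mul_sum, Finset.mul_sum, Finset.mul_sum]
        refine Finset.sum_congr rfl fun x _ => ?_
        rw [mul_smul_comm, mul_smul_comm, mul_smul_comm]
      rw [Finset.sum_congr rfl e6', Finset.sum_comm]
      refine Finset.sum_eq_zero fun x _ => ?_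
      by_cases hxq : x.val < q.val
      · rw [← Finset.smul_sum]
        have hIH := ih x (by omega) (c :: cs)
          (by simp only [List.length_cons]; omega) D C hD hC
        have e7 : ∀ j ∈ range N,
            S F N (j + 1 + cs.length) (c :: cs) * (D * (C ^ j * Matrix.single x q (1:R)))
              = (S F N (j + (c :: cs).length) (c :: cs) * D *
                  (C ^ j * Matrix.single x x (1:R))) * Matrix.single x q (1:R) := by
          intro j _
          have harg : j + 1 + cs.length = j + (c :: cs).length := by
            simp only [List.length_cons]; omega
          rw [harg]
          simp only [mul_assoc, Matrix.single_mul_single_same, one_mul]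
        rw [Finset.sum_congr rfl e7, ← Finset.sum_mul, hIH, zero_mul, smul_zero]
      · have hzero : (C - c • 1) x q = 0 := by
          by_cases hxq2 : x = q
          · subst hxq2
            simp [Matrix.sub_apply, Matrix.smul_apply, hc]
          · have h1 : C x q = 0 := by
              apply hC
              show (q : Fin n) < x
              rw [Fin.lt_def]
              have hne : x.val ≠ q.val := fun h => hxq2 (Fin.ext h)
              omega
            simp [Matrix.sub_apply, Matrix.smul_apply, h1, Matrix.one_apply_ne hxq2]
        exact Finset.sum_eq_zero fun j _ => by rw [hzero, zero_smul]
    rw [hT1, hT2, add_zero]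

lemma master (F : ℕ → M) (N : ℕ) (hF : ∀ i, N ≤ i → F i = 0)
    (hnull : ∀ C : M, C.BlockTriangular (id : Fin n → Fin n) → ∑ i ∈ range N, F i * C ^ i = 0)
    (D C : M) (hD : D.BlockTriangular (id : Fin n → Fin n))
    (hC : C.BlockTriangular (id : Fin n → Fin n)) :
    ∑ i ∈ range N, F i * D * C ^ i = 0 := by
  have h1 : ∀ i ∈ range N, F i * D * C ^ i
      = ∑ q : Fin n, F i * D * (C ^ i * Matrix.single q q (1:R)) := by
    intro i _
    calc F i * D * C ^ i = F i * D * (C ^ i * 1) := by rw [mul_one]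
      _ = F i * D * (C ^ i * ∑ q : Fin n, Matrix.single q q (1:R)) := by
          rw [← one_eq_sum_std]
      _ = ∑ q : Fin n, F i * D * (C ^ i * Matrix.single q q (1:R)) := by
          rw [Finset.mul_sum, Finset.mul_sum]
  rw [Finset.sum_congr rfl h1, Finset.sum_comm]
  refine Finset.sum_eq_zero fun q _ => ?_
  have hb := Bq F N hF hnull q [] (Nat.zero_le _) D C hD hC
  have e : ∀ a ∈ range N,
      S F N (a + ([] : List R).length) [] * D * (C ^ a * Matrix.single q q (1:R))
        = F a * D * (C ^ a * Matrix.single q q (1:R)) := by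
    intro a _
    rw [List.length_nil, Nat.add_zero, S_nil hF]
  rw [← Finset.sum_congr rfl e, hb]

lemma eval_mul_expand (p q : Polynomial M) (x : M) :
    (p * q).eval x
      = ∑ i ∈ range (p.natDegree + 1), p.coeff i * q.eval x * x ^ i := by
  conv_lhs => rw [p.as_sum_range' (p.natDegree + 1) (Nat.lt_succ_self _)]
  rw [Finset.sum_mul, Polynomial.eval_finset_sum]
  refine Finset.sum_congr rfl fun i _ => ?_
  rw [← Polynomial.C_mul_X_pow_eq_monomial, mul_assoc, Polynomial.X_pow_mul, ← mul_assoc,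
    Polynomial.eval_mul_X_pow, Polynomial.eval_C_mul, mul_assoc]

end NP

/-- The set of right null-polynomials on `Tₙ(R)` is a two-sided ideal of `(Tₙ(R))[x]`:
it contains `0`, is closed under addition and negation, and absorbs multiplication
on both sides by elements of `(Tₙ(R))[x]`. -/
theorem stmt15 (n : ℕ) (R : Type*) [CommRing R] :
    IsRightNull n R 0 ∧
    (∀ f g, IsRightNull n R f → IsRightNull n R g → IsRightNull n R (f + g)) ∧
    (∀ f, IsRightNull n R f → IsRightNull n R (-f)) ∧
    (∀ f g, IsRightNull n R f → IsTriPoly n R g →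
      IsRightNull n R (f * g) ∧ IsRightNull n R (g * f)) := by
  refine ⟨⟨fun k => by simp only [Polynomial.coeff_zero]; exact fun i j _ => rfl,
      fun C _ => by rw [Polynomial.eval_zero]⟩, ?_, ?_, ?_⟩
  · rintro f g ⟨hf1, hf2⟩ ⟨hg1, hg2⟩
    refine ⟨fun k => ?_, fun C hC => ?_⟩
    · rw [Polynomial.coeff_add]; exact (hf1 k).add (hg1 k)
    · rw [Polynomial.eval_add, hf2 C hC, hg2 C hC, add_zero]
  · rintro f ⟨hf1, hf2⟩
    refine ⟨fun k => ?_, fun C hC => ?_⟩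
    · rw [Polynomial.coeff_neg]; exact (hf1 k).neg
    · rw [Polynomial.eval_neg, hf2 C hC, neg_zero]
  · rintro f g ⟨hf1, hf2⟩ hg
    have htri_mul : ∀ (p q : Polynomial (Matrix (Fin n) (Fin n) R)),
        IsTriPoly n R p → IsTriPoly n R q → IsTriPoly n R (p * q) := by
      intro p q hp hq k
      rw [Polynomial.coeff_mul]
      exact NP.tri_sum fun x _ => (hp x.1).mul (hq x.2)
    have hevaltri : ∀ (p : Polynomial (Matrix (Fin n) (Fin n) R)),
        IsTriPoly n R p → ∀ C : Matrix (Fin n) (Fin n) R,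
          C.BlockTriangular id → (p.eval C).BlockTriangular id := by
      intro p hp C hC
      rw [Polynomial.eval_eq_sum_range]
      exact NP.tri_sum fun i _ => (hp i).mul (NP.tri_pow hC i)
    refine ⟨⟨htri_mul f g hf1 hg, fun C hC => ?_⟩,
      ⟨htri_mul g f hg hf1, fun C hC => ?_⟩⟩
    · rw [NP.eval_mul_expand f g C]
      have hF : ∀ i, f.natDegree + 1 ≤ i → f.coeff i = 0 := fun i hi =>
        f.coeff_eq_zero_of_natDegree_lt (by omega)
      have hnull : ∀ C' : Matrix (Fin n) (Fin n) R,
          C'.BlockTriangular (id : Fin n → Fin n) →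
            ∑ i ∈ Finset.range (f.natDegree + 1), f.coeff i * C' ^ i = 0 := by
        intro C' hC'
        rw [← Polynomial.eval_eq_sum_range]
        exact hf2 C' hC'
      exact NP.master (fun i => f.coeff i) (f.natDegree + 1) hF hnull
        (g.eval C) C (hevaltri g hg C hC) hC
    · rw [NP.eval_mul_expand g f C]
      exact Finset.sum_eq_zero fun i _ => by rw [hf2 C hC, mul_zero, zero_mul]
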